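/- Consider the coupled Fokker–Planck model of a TCL population, where the net flux function g satisfies conditions (G1)–(G3), and the initial data f₀(·,0) = f₀^{a0} on [x_L, x̲(0)] and f₀(·,0) = f₀^{b0} on [x̲(0), x̄(0)] are continuous and nonnegative, as are the initial data for f₁. Then the OFF-state density is nonnegative for all time: f₀(x,t) ≥ 0 for all t ≥ 0 and all x ∈ [x_L, x̄(t)]. -/

import Mathlib

open Set

/-- Right (one-sided) spatial derivative `∂_x f(x⁺, t)`. -/
noncomputable def rightD (f : ℝ → ℝ → ℝ) (x t : ℝ) : ℝ :=
  derivWithin (fun ξ => f ξ t) (Ici x) x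

/-- Left (one-sided) spatial derivative `∂_x f(x⁻, t)`. -/
noncomputable def leftD (f : ℝ → ℝ → ℝ) (x t : ℝ) : ℝ :=
  derivWithin (fun ξ => f ξ t) (Iic x) x

section AuxLemmas
open Filter
lemma aux_deriv_nonpos_of_left_min {φ : ℝ → ℝ} {c t : ℝ} (h : HasDerivAt φ c t)
    (hmin : ∀ᶠ τ in nhdsWithin t (Iio t), φ t ≤ φ τ) : c ≤ 0 := by
  have h' : HasDerivWithinAt φ c (Iio t) t := h.hasDerivWithinAt
  rw [hasDerivWithinAt_iff_tendsto_slope,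
    show Iio t \ {t} = Iio t from diff_singleton_eq_self (by simp)] at h'
  refine le_of_tendsto h' ?_
  filter_upwards [hmin, self_mem_nhdsWithin] with τ h1 h2
  rw [slope_def_field]
  exact div_nonpos_iff.mpr (Or.inl ⟨sub_nonneg.2 h1, sub_nonpos.2 (le_of_lt h2)⟩)

lemma aux_derivWithin_Ici_nonneg_of_min {ψ : ℝ → ℝ} {a : ℝ}
    (h : DifferentiableWithinAt ℝ ψ (Ici a) a)
    (hmin : ∀ᶠ x in nhdsWithin a (Ioi a), ψ a ≤ ψ x) : 0 ≤ derivWithin ψ (Ici a) a := by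
  have h' : HasDerivWithinAt ψ (derivWithin ψ (Ici a) a) (Ioi a) a :=
    h.hasDerivWithinAt.mono Ioi_subset_Ici_self
  rw [hasDerivWithinAt_iff_tendsto_slope,
    show Ioi a \ {a} = Ioi a from diff_singleton_eq_self (by simp)] at h'
  refine ge_of_tendsto h' ?_
  filter_upwards [hmin, self_mem_nhdsWithin] with x h1 h2
  rw [slope_def_field]
  exact div_nonneg (sub_nonneg.2 h1) (sub_nonneg.2 (le_of_lt h2))

lemma aux_derivWithin_Iic_nonpos_of_min {ψ : ℝ → ℝ} {a : ℝ}
    (h : DifferentiableWithinAt ℝ ψ (Iic a) a)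
    (hmin : ∀ᶠ x in nhdsWithin a (Iio a), ψ a ≤ ψ x) : derivWithin ψ (Iic a) a ≤ 0 := by
  have h' : HasDerivWithinAt ψ (derivWithin ψ (Iic a) a) (Iio a) a :=
    h.hasDerivWithinAt.mono Iio_subset_Iic_self
  rw [hasDerivWithinAt_iff_tendsto_slope,
    show Iio a \ {a} = Iio a from diff_singleton_eq_self (by simp)] at h'
  refine le_of_tendsto h' ?_
  filter_upwards [hmin, self_mem_nhdsWithin] with x h1 h2
  rw [slope_def_field]
  exact div_nonpos_iff.mpr (Or.inl ⟨sub_nonneg.2 h1, sub_nonpos.2 (le_of_lt h2)⟩)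

lemma aux_second_nonneg_of_min {V D : ℝ → ℝ} {c p q x₀ : ℝ} (hx : x₀ ∈ Ioo p q)
    (hV : ∀ ξ ∈ Ioo p q, HasDerivAt V (D ξ) ξ)
    (hmin : ∀ x ∈ Ioo p q, V x₀ ≤ V x)
    (hD : HasDerivAt D c x₀) (hD0 : D x₀ = 0) : 0 ≤ c := by
  by_contra hc
  push_neg at hc
  have hslope : Tendsto (slope D x₀) (nhdsWithin x₀ ({x₀}ᶜ)) (nhds c) :=
    hasDerivAt_iff_tendsto_slope.1 hD
  have h2 : ∀ᶠ ξ in nhdsWithin x₀ ({x₀}ᶜ), slope D x₀ ξ < 0 :=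
    hslope (Iio_mem_nhds hc)
  have h3 : ∀ᶠ ξ in nhdsWithin x₀ (Ioi x₀), D ξ < 0 := by
    have hmono : nhdsWithin x₀ (Ioi x₀) ≤ nhdsWithin x₀ ({x₀}ᶜ) :=
      nhdsWithin_mono x₀ (fun ξ hξ => ne_of_gt hξ)
    filter_upwards [h2.filter_mono hmono, self_mem_nhdsWithin] with ξ h4 h5
    have hpos : (0:ℝ) < ξ - x₀ := sub_pos.2 h5
    rw [slope_def_field, hD0, sub_zero] at h4
    by_contra hDξ
    push_neg at hDξ
    exact absurd (div_nonneg hDξ hpos.le) (not_le.2 h4)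
  have h5 : {ξ | D ξ < 0} ∩ Ioo x₀ q ∈ nhdsWithin x₀ (Ioi x₀) :=
    inter_mem h3 (Ioo_mem_nhdsGT_of_mem ⟨le_refl _, hx.2⟩)
  obtain ⟨r, hr, hsub⟩ := mem_nhdsGT_iff_exists_Ioc_subset.1 h5
  have hrq : r ∈ Ioo x₀ q := (hsub ⟨hr, le_refl r⟩).2
  have hanti : StrictAntiOn V (Icc x₀ r) := by
    apply strictAntiOn_of_deriv_neg (convex_Icc _ _)
    · intro ξ hξ
      have hξ' : ξ ∈ Ioo p q := ⟨lt_of_lt_of_le hx.1 hξ.1, lt_of_le_of_lt hξ.2 hrq.2⟩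
      exact ((hV ξ hξ').differentiableAt.continuousAt).continuousWithinAt
    · intro ξ hξ
      rw [interior_Icc] at hξ
      have hξ' : ξ ∈ Ioo p q := ⟨lt_trans hx.1 hξ.1, lt_trans hξ.2 hrq.2⟩
      rw [(hV ξ hξ').deriv]
      exact (hsub ⟨hξ.1, hξ.2.le⟩).1
  have : V r < V x₀ := hanti ⟨le_refl _, hrq.1.le⟩ ⟨hrq.1.le, le_refl _⟩ hrq.1
  exact absurd (hmin r ⟨lt_trans hx.1 hrq.1, hrq.2⟩) (not_le.2 this)


lemma aux_hasDerivAt_exp_lin (μ c a : ℝ) :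
    HasDerivAt (fun ξ : ℝ => Real.exp (μ * ξ + c)) (μ * Real.exp (μ * a + c)) a := by
  have h : HasDerivAt (fun ξ : ℝ => μ * ξ + c) μ a := by
    simpa using ((hasDerivAt_id a).const_mul μ).add_const c
  simpa [mul_comm] using h.exp

lemma aux_derivWithin_exp_mul (μ c a : ℝ) (f : ℝ → ℝ) (s : Set ℝ)
    (hs : UniqueDiffWithinAt ℝ s a) (hf : DifferentiableWithinAt ℝ f s a) :
    derivWithin (fun ξ => Real.exp (μ * ξ + c) * f ξ) s a =
      Real.exp (μ * a + c) * (μ * f a + derivWithin f s a) := by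
  have h := ((aux_hasDerivAt_exp_lin μ c a).hasDerivWithinAt (s := s)).mul hf.hasDerivWithinAt
  rw [show (fun ξ => Real.exp (μ * ξ + c) * f ξ) = (fun ξ => Real.exp (μ * ξ + c)) * f from rfl,
    h.derivWithin hs]
  ring

lemma aux_lip (g : ℝ → ℝ → ℝ) (hg : ContDiff ℝ 1 (fun p : ℝ × ℝ => g p.1 p.2))
    (hG3 : ∀ s τ : ℝ, |deriv (fun s' => g s' τ) s| + |deriv (fun τ' => g s τ') τ| ≤ 1)
    (s τ : ℝ) : g s τ ≤ g 0 τ + |s| := by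
  have hdiff : Differentiable ℝ (fun s' => g s' τ) := by
    have : Differentiable ℝ (fun p : ℝ × ℝ => g p.1 p.2) := hg.differentiable one_ne_zero
    intro x
    exact DifferentiableAt.comp x (this (x, τ))
      ((differentiableAt_id.prodMk (differentiableAt_const τ) :
        DifferentiableAt ℝ (fun s' : ℝ => (s', τ)) x))
  have hbound : ∀ x : ℝ, ‖deriv (fun s' => g s' τ) x‖₊ ≤ (1 : NNReal) := by
    intro x
    have h1 := hG3 x τ
    have h2 : |deriv (fun s' => g s' τ) x| ≤ 1 := by
      have := abs_nonneg (deriv (fun τ' => g x τ') τ)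
      linarith
    rw [← NNReal.coe_le_coe]
    simpa [nnnorm, Real.norm_eq_abs] using h2
  have hlip : LipschitzWith 1 (fun s' => g s' τ) :=
    lipschitzWith_of_nnnorm_deriv_le hdiff hbound
  have := hlip.dist_le_mul s 0
  rw [Real.dist_eq, NNReal.coe_one, one_mul, Real.dist_eq, sub_zero] at this
  have h3 : g s τ - g 0 τ ≤ |s| := le_trans (le_abs_self _) this
  linarith

lemma aux_interior_flux_lower (σ CR μ c : ℝ) (hσ : 0 < σ) (hCR : 0 < CR)
    (f : ℝ → ℝ) (a b x₀ A Fx : ℝ) (hx₀ : x₀ ∈ Ioo a b)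
    (hdiff : ∀ x ∈ Ioo a b, DifferentiableAt ℝ f x)
    (hmin : ∀ x ∈ Ioo a b,
      Real.exp (μ * x₀ + c) * f x₀ ≤ Real.exp (μ * x + c) * f x)
    (hF : HasDerivAt (fun ξ => σ ^ 2 / 2 * deriv f ξ - (A - ξ / CR) * f ξ) Fx x₀) :
    (σ ^ 2 * μ ^ 2 / 2 + 1 / CR + μ * (A - x₀ / CR)) * f x₀ ≤ Fx := by
  set d := deriv f with hd
  set V : ℝ → ℝ := fun ξ => Real.exp (μ * ξ + c) * f ξ with hVdef
  set D : ℝ → ℝ := fun ξ => Real.exp (μ * ξ + c) * (μ * f ξ + d ξ) with hDdef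
  have hVd : ∀ ξ ∈ Ioo a b, HasDerivAt V (D ξ) ξ := by
    intro ξ hξ
    have h1 := (aux_hasDerivAt_exp_lin μ c ξ).mul (hdiff ξ hξ).hasDerivAt
    have h2 : deriv f ξ = d ξ := rfl
    convert h1 using 1
    · rfl
    · rfl
    · rfl
    simp only [hDdef, h2]
    ring
  -- D x₀ = 0
  have hexppos : (0:ℝ) < Real.exp (μ * x₀ + c) := Real.exp_pos _
  have hlocmin : IsLocalMin V x₀ := by
    have : Ioo a b ∈ nhds x₀ := (isOpen_Ioo).mem_nhds hx₀
    exact Filter.eventually_of_mem this (fun x hx => hmin x hx)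
  have hD0 : D x₀ = 0 := hlocmin.hasDerivAt_eq_zero (hVd x₀ hx₀)
  have hd0 : d x₀ = -(μ * f x₀) := by
    have : μ * f x₀ + d x₀ = 0 := by
      have := hD0
      simp only [hDdef] at this
      exact (mul_eq_zero.1 this).resolve_left (ne_of_gt hexppos)
    linarith
  -- derivative of d at x₀
  have hprod : HasDerivAt (fun ξ => (A - ξ / CR) * f ξ)
      ((-(1 / CR)) * f x₀ + (A - x₀ / CR) * d x₀) x₀ := by
    have h1 : HasDerivAt (fun ξ : ℝ => A - ξ / CR) (-(1 / CR)) x₀ := by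
      have := ((hasDerivAt_id x₀).div_const CR).const_sub A
      simpa [one_div] using this
    exact h1.mul (hdiff x₀ hx₀).hasDerivAt
  have hσd : HasDerivAt (fun ξ => σ ^ 2 / 2 * d ξ)
      (Fx + ((-(1 / CR)) * f x₀ + (A - x₀ / CR) * d x₀)) x₀ := by
    have h1 := hF.add hprod
    have h2 : (fun ξ => σ ^ 2 / 2 * d ξ) =
        fun ξ => (σ ^ 2 / 2 * deriv f ξ - (A - ξ / CR) * f ξ) + (A - ξ / CR) * f ξ := by
      funext ξ; simp only [hd]; ring
    rw [h2]; exact h1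
  have hσ2 : (σ:ℝ) ^ 2 ≠ 0 := by positivity
  have hdd : HasDerivAt d
      ((2 / σ ^ 2) * (Fx + ((-(1 / CR)) * f x₀ + (A - x₀ / CR) * d x₀))) x₀ := by
    have h1 := hσd.const_mul (2 / σ ^ 2)
    have h2 : (fun ξ => (2 / σ ^ 2) * (σ ^ 2 / 2 * d ξ)) = d := by
      funext ξ; field_simp
    rw [h2] at h1; exact h1
  -- derivative of D at x₀
  have hDd : HasDerivAt D
      (μ * Real.exp (μ * x₀ + c) * (μ * f x₀ + d x₀) +
        Real.exp (μ * x₀ + c) * (μ * d x₀ +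
          (2 / σ ^ 2) * (Fx + ((-(1 / CR)) * f x₀ + (A - x₀ / CR) * d x₀)))) x₀ := by
    have h1 : HasDerivAt (fun ξ => μ * f ξ + d ξ)
        (μ * d x₀ + (2 / σ ^ 2) * (Fx + ((-(1 / CR)) * f x₀ + (A - x₀ / CR) * d x₀))) x₀ := by
      have := ((hdiff x₀ hx₀).hasDerivAt.const_mul μ).add hdd
      exact this
    exact (aux_hasDerivAt_exp_lin μ c x₀).mul h1
  have hc := aux_second_nonneg_of_min hx₀ hVd hmin hDd hD0
  -- unfold: with d x₀ = -(μ f x₀)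
  rw [hd0] at hc
  have h3 : 0 ≤ μ * -(μ * f x₀) +
      (2 / σ ^ 2) * (Fx + ((-(1 / CR)) * f x₀ + (A - x₀ / CR) * -(μ * f x₀))) := by
    have h4 : μ * f x₀ + -(μ * f x₀) = 0 := by ring
    rw [h4, mul_zero, zero_add] at hc  -- hc : 0 ≤ exp * (...)
    exact nonneg_of_mul_nonneg_right hc hexppos
  have hσpos : (0:ℝ) < σ ^ 2 := by positivity
  set Y : ℝ := Fx + ((-(1 / CR)) * f x₀ + (A - x₀ / CR) * -(μ * f x₀)) with hY
  have h7 : (σ ^ 2 / 2) * (μ * -(μ * f x₀) + 2 / σ ^ 2 * Y) =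
      σ ^ 2 * μ ^ 2 / 2 * (-(f x₀)) + Y := by
    field_simp
  have h8 : 0 ≤ σ ^ 2 * μ ^ 2 / 2 * (-(f x₀)) + Y := by
    rw [← h7]
    have := mul_le_mul_of_nonneg_left h3 (le_of_lt (by positivity : (0:ℝ) < σ ^ 2 / 2))
    simpa using this
  rw [hY] at h8
  nlinarith [h8]

lemma aux_nonpos_of_mul_nonpos {e X : ℝ} (h : e * X ≤ 0) (he : 0 < e) : X ≤ 0 := by
  nlinarith

lemma aux_nonneg_of_mul_nonneg {e X : ℝ} (h : 0 ≤ e * X) (he : 0 < e) : 0 ≤ X := by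
  nlinarith

end AuxLemmas

set_option maxHeartbeats 2000000

/-- non-negativeness of the OFF-state density: for the coupled
Fokker–Planck model of a TCL population, with the net switching flux `g`
satisfying conditions (G1)–(G3) and nonnegative continuous initial data, the
OFF-state density satisfies `f₀(x,t) ≥ 0` for all `t ≥ 0` and `x ∈ [x_L, x̄(t)]`. -/
theorem off_state_nonneg
    (σ C R P xL xH : ℝ)
    (hσ : 0 < σ) (hC : 0 < C) (hR : 0 < R) (hP : 0 < P) (hLH : xL < xH)
    (xlo xhi u xa : ℝ → ℝ)
    (hu_cont : ContinuousOn u (Ici 0)) (hxa_cont : ContinuousOn xa (Ici 0))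
    (hrange : ∀ t ≥ (0:ℝ), xL < xlo t ∧ xlo t < xhi t ∧ xhi t < xH)
    (hxlo_deriv : ∀ t ≥ (0:ℝ), HasDerivAt xlo (u t) t)
    (hxhi_deriv : ∀ t ≥ (0:ℝ), HasDerivAt xhi (u t) t)
    (f₀ f₁ α₀ α₁ : ℝ → ℝ → ℝ) (g : ℝ → ℝ → ℝ)
    (hg : ContDiff ℝ 1 (fun p : ℝ × ℝ => g p.1 p.2))
    (hα₀ : ∀ x t, α₀ x t = (xa t - x) / (C * R))
    (hα₁ : ∀ x t, α₁ x t = (xa t - x - R * P) / (C * R))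
    -- continuity up to the closures of the four space-time regions
    (hf₀_cont_a : ContinuousOn (fun p : ℝ × ℝ => f₀ p.1 p.2)
      {p : ℝ × ℝ | 0 ≤ p.2 ∧ xL ≤ p.1 ∧ p.1 ≤ xlo p.2})
    (hf₀_cont_b : ContinuousOn (fun p : ℝ × ℝ => f₀ p.1 p.2)
      {p : ℝ × ℝ | 0 ≤ p.2 ∧ xlo p.2 ≤ p.1 ∧ p.1 ≤ xhi p.2})
    (hf₁_cont_b : ContinuousOn (fun p : ℝ × ℝ => f₁ p.1 p.2)
      {p : ℝ × ℝ | 0 ≤ p.2 ∧ xlo p.2 ≤ p.1 ∧ p.1 ≤ xhi p.2})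
    (hf₁_cont_c : ContinuousOn (fun p : ℝ × ℝ => f₁ p.1 p.2)
      {p : ℝ × ℝ | 0 ≤ p.2 ∧ xhi p.2 ≤ p.1 ∧ p.1 ≤ xH})
    -- spatial differentiability in the interiors of the regions
    (hf₀_x : ∀ t > (0:ℝ), ∀ x ∈ Ioo xL (xlo t) ∪ Ioo (xlo t) (xhi t),
      DifferentiableAt ℝ (fun ξ => f₀ ξ t) x)
    (hf₁_x : ∀ t > (0:ℝ), ∀ x ∈ Ioo (xlo t) (xhi t) ∪ Ioo (xhi t) xH,
      DifferentiableAt ℝ (fun ξ => f₁ ξ t) x)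
    -- existence of the one-sided spatial derivatives (conditions (F2), (F3))
    (hf₀_xL : ∀ t > (0:ℝ), DifferentiableWithinAt ℝ (fun ξ => f₀ ξ t) (Ici xL) xL)
    (hf₀_xloL : ∀ t > (0:ℝ), DifferentiableWithinAt ℝ (fun ξ => f₀ ξ t) (Iic (xlo t)) (xlo t))
    (hf₀_xloR : ∀ t > (0:ℝ), DifferentiableWithinAt ℝ (fun ξ => f₀ ξ t) (Ici (xlo t)) (xlo t))
    (hf₀_xhiL : ∀ t > (0:ℝ), DifferentiableWithinAt ℝ (fun ξ => f₀ ξ t) (Iic (xhi t)) (xhi t))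
    (hf₁_xloR : ∀ t > (0:ℝ), DifferentiableWithinAt ℝ (fun ξ => f₁ ξ t) (Ici (xlo t)) (xlo t))
    (hf₁_xhiL : ∀ t > (0:ℝ), DifferentiableWithinAt ℝ (fun ξ => f₁ ξ t) (Iic (xhi t)) (xhi t))
    (hf₁_xhiR : ∀ t > (0:ℝ), DifferentiableWithinAt ℝ (fun ξ => f₁ ξ t) (Ici (xhi t)) (xhi t))
    (hf₁_xH : ∀ t > (0:ℝ), DifferentiableWithinAt ℝ (fun ξ => f₁ ξ t) (Iic xH) xH)
    -- the four coupled Fokker–Planck equations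
    (hpde_a : ∀ t > (0:ℝ), ∀ x ∈ Ioo xL (xlo t), ∃ Fx : ℝ,
      HasDerivAt (fun ξ => σ ^ 2 / 2 * deriv (fun ζ => f₀ ζ t) ξ - (α₀ ξ t - u t) * f₀ ξ t)
        Fx x ∧
      HasDerivAt (fun τ => f₀ x τ) Fx t)
    (hpde_b0 : ∀ t > (0:ℝ), ∀ x ∈ Ioo (xlo t) (xhi t), ∃ Fx : ℝ,
      HasDerivAt (fun ξ => σ ^ 2 / 2 * deriv (fun ζ => f₀ ζ t) ξ - (α₀ ξ t - u t) * f₀ ξ t)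
        Fx x ∧
      HasDerivAt (fun τ => f₀ x τ) (Fx - g (f₀ x t) (f₁ x t)) t)
    (hpde_b1 : ∀ t > (0:ℝ), ∀ x ∈ Ioo (xlo t) (xhi t), ∃ Fx : ℝ,
      HasDerivAt (fun ξ => σ ^ 2 / 2 * deriv (fun ζ => f₁ ζ t) ξ - (α₁ ξ t - u t) * f₁ ξ t)
        Fx x ∧
      HasDerivAt (fun τ => f₁ x τ) (Fx + g (f₀ x t) (f₁ x t)) t)
    (hpde_c : ∀ t > (0:ℝ), ∀ x ∈ Ioo (xhi t) xH, ∃ Fx : ℝ,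
      HasDerivAt (fun ξ => σ ^ 2 / 2 * deriv (fun ζ => f₁ ζ t) ξ - (α₁ ξ t - u t) * f₁ ξ t)
        Fx x ∧
      HasDerivAt (fun τ => f₁ x τ) Fx t)
    -- boundary conditions
    (hbcL : ∀ t > (0:ℝ), σ ^ 2 / 2 * rightD f₀ xL t = (α₀ xL t - u t) * f₀ xL t)
    (hbc_jump_lo : ∀ t > (0:ℝ),
      leftD f₀ (xlo t) t = rightD f₀ (xlo t) t + rightD f₁ (xlo t) t)
    (hbc0_hi : ∀ t > (0:ℝ), f₀ (xhi t) t = 0)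
    (hbc1_lo : ∀ t > (0:ℝ), f₁ (xlo t) t = 0)
    (hbc_jump_hi : ∀ t > (0:ℝ),
      rightD f₁ (xhi t) t = leftD f₀ (xhi t) t + leftD f₁ (xhi t) t)
    (hbcH : ∀ t > (0:ℝ), σ ^ 2 / 2 * leftD f₁ xH t = (α₁ xH t - u t) * f₁ xH t)
    -- fixed deadband width
    (δ₀ : ℝ) (hδ₀ : 0 < δ₀) (hwidth : ∀ t ≥ (0:ℝ), xhi t - xlo t = δ₀)
    -- sign conditions at the deadband boundaries
    (hbc_sign1 : ∀ t > (0:ℝ), 0 < rightD f₁ (xlo t) t)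
    (hbc_sign0 : ∀ t > (0:ℝ), leftD f₀ (xhi t) t < 0)
    -- conditions (G1)–(G3) on the net switching flux
    (hG1 : ∀ τ : ℝ, g 0 τ ≤ 0)
    (hG2 : ∀ s : ℝ, 0 ≤ g s 0)
    (hG3 : ∀ s τ : ℝ, |deriv (fun s' => g s' τ) s| + |deriv (fun τ' => g s τ') τ| ≤ 1)
    -- nonnegative (continuous) initial data
    (hIC0 : ∀ x ∈ Icc xL (xhi 0), 0 ≤ f₀ x 0)
    (hIC1 : ∀ x ∈ Icc (xlo 0) xH, 0 ≤ f₁ x 0) :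
    ∀ t ≥ (0:ℝ), ∀ x ∈ Icc xL (xhi t), 0 ≤ f₀ x t := by
  intro T hT xg hxg
  have hCR : (0:ℝ) < C * R := mul_pos hC hR
  -- extended continuous boundary curves
  have hxlo'c : Continuous (fun s : ℝ => xlo (max s 0)) := by
    rw [continuous_iff_continuousAt]
    intro s
    have h1 : ContinuousAt (fun s : ℝ => max s 0) s :=
      (continuous_id.max continuous_const).continuousAt
    exact show ContinuousAt (xlo ∘ (fun s : ℝ => max s 0)) s from
      ContinuousAt.comp ((hxlo_deriv _ (le_max_right s 0)).continuousAt) h1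
  have hxhi'c : Continuous (fun s : ℝ => xhi (max s 0)) := by
    rw [continuous_iff_continuousAt]
    intro s
    have h1 : ContinuousAt (fun s : ℝ => max s 0) s :=
      (continuous_id.max continuous_const).continuousAt
    exact show ContinuousAt (xhi ∘ (fun s : ℝ => max s 0)) s from
      ContinuousAt.comp ((hxhi_deriv _ (le_max_right s 0)).continuousAt) h1
  have hxlo'eq : ∀ s : ℝ, 0 ≤ s → xlo (max s 0) = xlo s := fun s hs => by rw [max_eq_left hs]
  have hxhi'eq : ∀ s : ℝ, 0 ≤ s → xhi (max s 0) = xhi s := fun s hs => by rw [max_eq_left hs]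
  -- bounds on xa and u over [0,T]
  obtain ⟨Ma, hMa⟩ : ∃ M : ℝ, ∀ t ∈ Icc (0:ℝ) T, |xa t| ≤ M := by
    obtain ⟨M, hM⟩ := isCompact_Icc.exists_bound_of_continuousOn
      (hxa_cont.mono (fun t ht => ht.1))
    exact ⟨M, fun t ht => by simpa [Real.norm_eq_abs] using hM t ht⟩
  obtain ⟨Mu, hMu⟩ : ∃ M : ℝ, ∀ t ∈ Icc (0:ℝ) T, |u t| ≤ M := by
    obtain ⟨M, hM⟩ := isCompact_Icc.exists_bound_of_continuousOn
      (hu_cont.mono (fun t ht => ht.1))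
    exact ⟨M, fun t ht => by simpa [Real.norm_eq_abs] using hM t ht⟩
  set B₀ : ℝ := (Ma + (|xL| + |xH|) + R * P) / (C * R) + Mu with hB₀def
  have habs : ∀ t ∈ Icc (0:ℝ) T, ∀ y ∈ Icc xL xH,
      |(xa t - y) / (C * R) - u t| ≤ B₀ ∧ |(xa t - y - R * P) / (C * R) - u t| ≤ B₀ := by
    intro t ht y hy
    have h1 := hMa t ht
    have h2 := hMu t ht
    have hy' : |y| ≤ |xL| + |xH| := by
      rcases le_total 0 y with h | h
      · rw [abs_of_nonneg h]
        calc y ≤ xH := hy.2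
        _ ≤ |xH| := le_abs_self _
        _ ≤ |xL| + |xH| := le_add_of_nonneg_left (abs_nonneg _)
      · rw [abs_of_nonpos h]
        calc -y ≤ -xL := neg_le_neg hy.1
        _ ≤ |xL| := neg_le_abs _
        _ ≤ |xL| + |xH| := le_add_of_nonneg_right (abs_nonneg _)
    have hRP : (0:ℝ) ≤ R * P := le_of_lt (mul_pos hR hP)
    have e1 : |xa t - y| ≤ Ma + (|xL| + |xH|) + R * P := by
      have := abs_sub (xa t) y
      linarith
    have e2 : |xa t - y - R * P| ≤ Ma + (|xL| + |xH|) + R * P := by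
      have h3 := abs_sub (xa t - y) (R * P)
      have h4 := abs_sub (xa t) y
      rw [abs_of_nonneg hRP] at h3
      linarith
    constructor
    · have h5 : |(xa t - y) / (C * R) - u t| ≤ |(xa t - y) / (C * R)| + |u t| :=
        abs_sub _ _
      rw [abs_div, abs_of_pos hCR] at h5
      have h6 : |xa t - y| / (C * R) ≤ (Ma + (|xL| + |xH|) + R * P) / (C * R) := by
        gcongr
      rw [hB₀def]
      linarith
    · have h5 : |(xa t - y - R * P) / (C * R) - u t| ≤
          |(xa t - y - R * P) / (C * R)| + |u t| := abs_sub _ _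
      rw [abs_div, abs_of_pos hCR] at h5
      have h6 : |xa t - y - R * P| / (C * R) ≤ (Ma + (|xL| + |xH|) + R * P) / (C * R) := by
        gcongr
      rw [hB₀def]
      linarith
  have hB₀ : 0 ≤ B₀ := by
    have := (habs 0 ⟨le_refl 0, hT⟩ xL ⟨le_refl xL, hLH.le⟩).1
    exact le_trans (abs_nonneg _) this
  set μ : ℝ := 2 / σ ^ 2 * B₀ + 1 with hμdef
  have hσ2pos : (0:ℝ) < σ ^ 2 := by positivity
  have hμ1 : 1 ≤ μ := by
    rw [hμdef]
    have : 0 ≤ 2 / σ ^ 2 * B₀ := by positivity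
    linarith
  have hμ0 : 0 ≤ μ := by linarith
  set lam : ℝ := σ ^ 2 * μ ^ 2 / 2 + 1 / (C * R) + μ * B₀ + 2 with hlamdef
  set v : ℝ × ℝ → ℝ := fun p => Real.exp (μ * p.1 - lam * p.2) * f₀ p.1 p.2 with hvdef
  set RA : Set (ℝ × ℝ) :=
    {p | 0 ≤ p.2 ∧ p.2 ≤ T ∧ xL ≤ p.1 ∧ p.1 ≤ xlo (max p.2 0)} with hRAdef
  set RB : Set (ℝ × ℝ) :=
    {p | 0 ≤ p.2 ∧ p.2 ≤ T ∧ xlo (max p.2 0) ≤ p.1 ∧ p.1 ≤ xhi (max p.2 0)} with hRBdef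
  -- compactness
  have hsubA : RA ⊆ Icc xL xH ×ˢ Icc (0:ℝ) T := by
    rintro p ⟨h1, h2, h3, h4⟩
    have h5 := hrange p.2 h1
    rw [hxlo'eq p.2 h1] at h4
    exact ⟨⟨h3, le_trans h4 (le_of_lt (lt_trans h5.2.1 h5.2.2))⟩, h1, h2⟩
  have hsubB : RB ⊆ Icc xL xH ×ˢ Icc (0:ℝ) T := by
    rintro p ⟨h1, h2, h3, h4⟩
    have h5 := hrange p.2 h1
    rw [hxlo'eq p.2 h1] at h3
    rw [hxhi'eq p.2 h1] at h4
    exact ⟨⟨le_trans (le_of_lt h5.1) h3, le_trans h4 h5.2.2.le⟩, h1, h2⟩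
  have hAclosed : IsClosed RA := by
    have hset : RA = ({p : ℝ × ℝ | 0 ≤ p.2} ∩ {p | p.2 ≤ T}) ∩
        ({p | xL ≤ p.1} ∩ {p | p.1 ≤ xlo (max p.2 0)}) := by
      rw [hRAdef]; ext p; simp only [mem_setOf_eq, mem_inter_iff]; tauto
    rw [hset]
    exact ((isClosed_le continuous_const continuous_snd).inter
      (isClosed_le continuous_snd continuous_const)).inter
      ((isClosed_le continuous_const continuous_fst).inter
      (isClosed_le continuous_fst (hxlo'c.comp continuous_snd)))
  have hBclosed : IsClosed RB := by
    have hset : RB = ({p : ℝ × ℝ | 0 ≤ p.2} ∩ {p | p.2 ≤ T}) ∩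
        ({p | xlo (max p.2 0) ≤ p.1} ∩ {p | p.1 ≤ xhi (max p.2 0)}) := by
      rw [hRBdef]; ext p; simp only [mem_setOf_eq, mem_inter_iff]; tauto
    rw [hset]
    exact ((isClosed_le continuous_const continuous_snd).inter
      (isClosed_le continuous_snd continuous_const)).inter
      ((isClosed_le (hxlo'c.comp continuous_snd) continuous_fst).inter
      (isClosed_le continuous_fst (hxhi'c.comp continuous_snd)))
  have hAcomp : IsCompact RA :=
    (isCompact_Icc.prod isCompact_Icc).of_isClosed_subset hAclosed hsubA
  have hBcomp : IsCompact RB :=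
    (isCompact_Icc.prod isCompact_Icc).of_isClosed_subset hBclosed hsubB
  have hAne : RA.Nonempty := by
    refine ⟨(xL, 0), le_refl 0, hT, le_refl xL, ?_⟩
    show xL ≤ xlo (max (0:ℝ) 0)
    rw [max_self]
    exact (hrange 0 (le_refl 0)).1.le
  have hBne : RB.Nonempty := by
    refine ⟨(xlo 0, 0), le_refl 0, hT, ?_, ?_⟩
    · show xlo (max (0:ℝ) 0) ≤ xlo 0
      rw [max_self]
    · show xlo 0 ≤ xhi (max (0:ℝ) 0)
      rw [max_self]
      exact (hrange 0 (le_refl 0)).2.1.le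
  have hexpc : Continuous (fun p : ℝ × ℝ => Real.exp (μ * p.1 - lam * p.2)) := by
    apply Real.continuous_exp.comp
    exact (continuous_const.mul continuous_fst).sub (continuous_const.mul continuous_snd)
  have hvA : ContinuousOn v RA := by
    apply hexpc.continuousOn.mul
    apply hf₀_cont_a.mono
    rintro p ⟨h1, h2, h3, h4⟩
    rw [hxlo'eq p.2 h1] at h4
    exact ⟨h1, h3, h4⟩
  have hvB : ContinuousOn v RB := by
    apply hexpc.continuousOn.mul
    apply hf₀_cont_b.mono
    rintro p ⟨h1, h2, h3, h4⟩
    rw [hxlo'eq p.2 h1] at h3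
    rw [hxhi'eq p.2 h1] at h4
    exact ⟨h1, h3, h4⟩
  obtain ⟨pA, hpAmem, hpAmin'⟩ := hAcomp.exists_isMinOn hAne hvA
  obtain ⟨pB, hpBmem, hpBmin'⟩ := hBcomp.exists_isMinOn hBne hvB
  have hpAmin : ∀ q ∈ RA, v pA ≤ v q := fun q hq => hpAmin' hq
  have hpBmin : ∀ q ∈ RB, v pB ≤ v q := fun q hq => hpBmin' hq
  obtain ⟨pS, hpS, hpSmin⟩ : ∃ p ∈ RA ∪ RB, ∀ q ∈ RA ∪ RB, v p ≤ v q := by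
    rcases le_total (v pA) (v pB) with h | h
    · exact ⟨pA, Or.inl hpAmem, fun q hq =>
        hq.elim (fun h' => hpAmin q h') (fun h' => le_trans h (hpBmin q h'))⟩
    · exact ⟨pB, Or.inr hpBmem, fun q hq =>
        hq.elim (fun h' => le_trans h (hpAmin q h')) (fun h' => hpBmin q h')⟩
  -- conclusion if the minimum is nonnegative
  by_cases hm : 0 ≤ v pS
  · have hmemg : (xg, T) ∈ RA ∪ RB := by
      rcases le_total xg (xlo T) with h | h
      · left
        refine ⟨hT, le_refl T, hxg.1, ?_⟩
        rw [hxlo'eq T hT]; exact h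
      · right
        refine ⟨hT, le_refl T, ?_, ?_⟩
        · rw [hxlo'eq T hT]; exact h
        · rw [hxhi'eq T hT]; exact hxg.2
    have h1 : 0 ≤ v (xg, T) := le_trans hm (hpSmin _ hmemg)
    have h2 : (0:ℝ) < Real.exp (μ * xg - lam * T) := Real.exp_pos _
    rw [hvdef] at h1
    exact aux_nonneg_of_mul_nonneg h1 h2
  exfalso
  push_neg at hm
  obtain ⟨xs, ts⟩ := pS
  have hbasic : 0 ≤ ts ∧ ts ≤ T ∧ xL ≤ xs ∧ xs ≤ xhi ts := by
    rcases hpS with h | h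
    · obtain ⟨h1, h2, h3, h4⟩ := h
      rw [hxlo'eq _ h1] at h4
      exact ⟨h1, h2, h3, le_trans h4 (hrange _ h1).2.1.le⟩
    · obtain ⟨h1, h2, h3, h4⟩ := h
      rw [hxlo'eq _ h1] at h3
      rw [hxhi'eq _ h1] at h4
      exact ⟨h1, h2, le_trans (hrange _ h1).1.le h3, h4⟩
  obtain ⟨hts0, htsT, hxsL, hxsHi⟩ := hbasic
  have hvps : v (xs, ts) = Real.exp (μ * xs - lam * ts) * f₀ xs ts := rfl
  have hfneg : f₀ xs ts < 0 := by
    rw [hvps] at hm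
    nlinarith [Real.exp_pos (μ * xs - lam * ts)]
  -- t = 0 is impossible
  rcases eq_or_lt_of_le hts0 with hts0eq | htspos
  · subst hts0eq
    have := hIC0 xs ⟨hxsL, hxsHi⟩
    linarith
  -- positive time: the slice function and slice minimum
  have hrng := hrange ts hts0
  set cts : ℝ := -(lam * ts) with hctsdef
  set V : ℝ → ℝ := fun ξ => Real.exp (μ * ξ + cts) * f₀ ξ ts with hVdef
  have hVeq : ∀ y : ℝ, V y = v (y, ts) := by
    intro y
    rw [hVdef, hvdef]
    simp only
    rw [show μ * y + cts = μ * y - lam * ts by rw [hctsdef]; ring]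
  have hsliceV : ∀ y ∈ Icc xL (xhi ts), V xs ≤ V y := by
    intro y hy
    rw [hVeq, hVeq]
    refine hpSmin (y, ts) ?_
    rcases le_total y (xlo ts) with h | h
    · left
      refine ⟨hts0, htsT, hy.1, ?_⟩
      rw [hxlo'eq _ hts0]; exact h
    · right
      refine ⟨hts0, htsT, ?_, ?_⟩
      · rw [hxlo'eq _ hts0]; exact h
      · rw [hxhi'eq _ hts0]; exact hy.2
  have hVxs : V xs = v (xs, ts) := by rw [hVeq]
  -- case x = xhi ts
  rcases eq_or_lt_of_le hxsHi with hxhiEq | hxhiLt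
  · have h0 := hbc0_hi ts htspos
    rw [← hxhiEq] at h0
    rw [h0] at hfneg
    exact absurd hfneg (lt_irrefl 0)
  -- case x = xL : Robin boundary condition
  rcases eq_or_lt_of_le hxsL with hxLEq | hxLlt
  · -- hxLEq : xL = xs
    have hdwf : DifferentiableWithinAt ℝ (fun ξ => f₀ ξ ts) (Ici xL) xL := hf₀_xL ts htspos
    have hdwV : DifferentiableWithinAt ℝ V (Ici xL) xL := by
      rw [hVdef]
      exact ((aux_hasDerivAt_exp_lin μ cts xL).differentiableAt.differentiableWithinAt).mul hdwf
    have hminV : ∀ᶠ y in nhdsWithin xL (Ioi xL), V xL ≤ V y := by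
      have hLhi : xL < xhi ts := by rw [hxLEq]; exact hxhiLt
      have hmem : Ioo xL (xhi ts) ∈ nhdsWithin xL (Ioi xL) :=
        Ioo_mem_nhdsGT_of_mem ⟨le_refl xL, hLhi⟩
      filter_upwards [hmem] with y hy
      rw [hxLEq]
      exact hsliceV y ⟨hy.1.le, hy.2.le⟩
    have hge := aux_derivWithin_Ici_nonneg_of_min hdwV hminV
    rw [hVdef, aux_derivWithin_exp_mul μ cts xL (fun ξ => f₀ ξ ts) (Ici xL)
      (uniqueDiffOn_Ici xL xL self_mem_Ici) hdwf] at hge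
    have h1 : 0 ≤ μ * f₀ xL ts + derivWithin (fun ξ => f₀ ξ ts) (Ici xL) xL :=
      aux_nonneg_of_mul_nonneg hge (Real.exp_pos _)
    have h2 := hbcL ts htspos
    rw [rightD] at h2
    have hσ2pos' : (σ:ℝ) ^ 2 ≠ 0 := by positivity
    have h3 : derivWithin (fun ξ => f₀ ξ ts) (Ici xL) xL =
        2 / σ ^ 2 * ((α₀ xL ts - u ts) * f₀ xL ts) := by
      rw [← h2]
      field_simp
    rw [h3] at h1
    have h4 : |α₀ xL ts - u ts| ≤ B₀ := by
      rw [hα₀]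
      exact (habs ts ⟨hts0, htsT⟩ xL ⟨le_refl xL, hLH.le⟩).1
    have h5 : f₀ xL ts < 0 := by rw [hxLEq]; exact hfneg
    have h6 : -B₀ ≤ α₀ xL ts - u ts := (abs_le.1 h4).1
    -- 0 ≤ (μ + (2/σ²)(α-u)) f₀ with coefficient ≥ 1 and f₀ < 0
    have h7 : 1 ≤ μ + 2 / σ ^ 2 * (α₀ xL ts - u ts) := by
      have h8 : 2 / σ ^ 2 * (-B₀) ≤ 2 / σ ^ 2 * (α₀ xL ts - u ts) :=
        mul_le_mul_of_nonneg_left h6 (by positivity)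
      have h9 : 2 / σ ^ 2 * (-B₀) = -(2 / σ ^ 2 * B₀) := by ring
      rw [h9] at h8
      rw [hμdef]
      linarith
    nlinarith [h1, h5, h7]
  -- remaining cases: interior or kink
  rcases lt_trichotomy xs (xlo ts) with hcase | hcase | hcase
  · -- interior of region a
    obtain ⟨Fx, hF, hTd⟩ := hpde_a ts htspos xs ⟨hxLlt, hcase⟩
    -- time derivative bound : Fx ≤ lam * f₀ xs ts
    have hcontlo : ContinuousAt xlo ts := (hxlo_deriv ts hts0).continuousAt
    have hevlo : ∀ᶠ τ in nhds ts, xs < xlo τ := hcontlo (Ioi_mem_nhds hcase)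
    have hevpos : ∀ᶠ τ in nhds ts, 0 < τ := eventually_gt_nhds htspos
    have htmin : ∀ᶠ τ in nhdsWithin ts (Iio ts),
        (fun τ => Real.exp (μ * xs - lam * τ) * f₀ xs τ) ts ≤
        (fun τ => Real.exp (μ * xs - lam * τ) * f₀ xs τ) τ := by
      filter_upwards [hevlo.filter_mono nhdsWithin_le_nhds,
        hevpos.filter_mono nhdsWithin_le_nhds, self_mem_nhdsWithin] with τ h1 h2 h3
      have hmem : (xs, τ) ∈ RA ∪ RB := by
        left
        refine ⟨h2.le, le_trans (le_of_lt h3) htsT, hxsL, ?_⟩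
        rw [hxlo'eq _ h2.le]; exact h1.le
      exact hpSmin (xs, τ) hmem
    have hdt : HasDerivAt (fun τ => Real.exp (μ * xs - lam * τ) * f₀ xs τ)
        (-lam * Real.exp (μ * xs - lam * ts) * f₀ xs ts +
          Real.exp (μ * xs - lam * ts) * Fx) ts := by
      have he : HasDerivAt (fun τ : ℝ => Real.exp (μ * xs - lam * τ))
          (-lam * Real.exp (μ * xs - lam * ts)) ts := by
        have h1 : HasDerivAt (fun τ : ℝ => μ * xs - lam * τ) (-lam) ts := by
          simpa using ((hasDerivAt_id ts).const_mul lam).const_sub (μ * xs)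
        simpa [mul_comm] using h1.exp
      exact he.mul hTd
    have hdt0 := aux_deriv_nonpos_of_left_min hdt htmin
    have hup : Fx ≤ lam * f₀ xs ts := by
      have h9 : Real.exp (μ * xs - lam * ts) * (-lam * f₀ xs ts + Fx) =
          -lam * Real.exp (μ * xs - lam * ts) * f₀ xs ts +
            Real.exp (μ * xs - lam * ts) * Fx := by ring
      have h10 := aux_nonpos_of_mul_nonpos (h9 ▸ hdt0 : _) (Real.exp_pos _)
      linarith
    -- spatial lower bound
    set Aa : ℝ := xa ts / (C * R) - u ts with hAadef
    have hF' : HasDerivAt (fun ξ => σ ^ 2 / 2 * deriv (fun ζ => f₀ ζ ts) ξ -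
        (Aa - ξ / (C * R)) * f₀ ξ ts) Fx xs := by
      have hfun : (fun ξ => σ ^ 2 / 2 * deriv (fun ζ => f₀ ζ ts) ξ -
          (α₀ ξ ts - u ts) * f₀ ξ ts) = (fun ξ => σ ^ 2 / 2 * deriv (fun ζ => f₀ ζ ts) ξ -
          (Aa - ξ / (C * R)) * f₀ ξ ts) := by
        funext ξ
        rw [hα₀, hAadef]
        ring
      rw [← hfun]
      exact hF
    have hlow := aux_interior_flux_lower σ (C * R) μ cts hσ hCR (fun ξ => f₀ ξ ts)
      xL (xlo ts) xs Aa Fx ⟨hxLlt, hcase⟩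
      (fun y hy => hf₀_x ts htspos y (Or.inl hy))
      (fun y hy => by
        have h := hsliceV y ⟨hy.1.le, le_trans hy.2.le (hrng.2.1.le)⟩
        simpa [hVdef] using h) hF'
    have hAabs : |Aa - xs / (C * R)| ≤ B₀ := by
      have heq : Aa - xs / (C * R) = (xa ts - xs) / (C * R) - u ts := by
        rw [hAadef]; ring
      rw [heq]
      exact (habs ts ⟨hts0, htsT⟩ xs ⟨hxsL, le_trans hxsHi hrng.2.2.le⟩).1
    have h1 : μ * (Aa - xs / (C * R)) ≤ μ * B₀ :=
      mul_le_mul_of_nonneg_left (abs_le.1 hAabs).2 hμ0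
    have hKf := le_trans hlow hup
    rw [hlamdef] at hKf
    nlinarith [hKf, h1, hfneg]
  · -- kink case : xs = xlo ts
    have hdwL : DifferentiableWithinAt ℝ (fun ξ => f₀ ξ ts) (Iic xs) xs := by
      rw [hcase]; exact hf₀_xloL ts htspos
    have hdwR : DifferentiableWithinAt ℝ (fun ξ => f₀ ξ ts) (Ici xs) xs := by
      rw [hcase]; exact hf₀_xloR ts htspos
    have hdwVL : DifferentiableWithinAt ℝ V (Iic xs) xs := by
      rw [hVdef]
      exact ((aux_hasDerivAt_exp_lin μ cts xs).differentiableAt.differentiableWithinAt).mul hdwL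
    have hdwVR : DifferentiableWithinAt ℝ V (Ici xs) xs := by
      rw [hVdef]
      exact ((aux_hasDerivAt_exp_lin μ cts xs).differentiableAt.differentiableWithinAt).mul hdwR
    have hminL : ∀ᶠ y in nhdsWithin xs (Iio xs), V xs ≤ V y := by
      have hmem : Ioo xL xs ∈ nhdsWithin xs (Iio xs) :=
        Ioo_mem_nhdsLT_of_mem ⟨hxLlt, le_refl xs⟩
      filter_upwards [hmem] with y hy
      exact hsliceV y ⟨hy.1.le, le_trans hy.2.le hxsHi⟩
    have hminR : ∀ᶠ y in nhdsWithin xs (Ioi xs), V xs ≤ V y := by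
      have hmem : Ioo xs (xhi ts) ∈ nhdsWithin xs (Ioi xs) :=
        Ioo_mem_nhdsGT_of_mem ⟨le_refl xs, hxhiLt⟩
      filter_upwards [hmem] with y hy
      exact hsliceV y ⟨le_trans hxsL hy.1.le, hy.2.le⟩
    have hL := aux_derivWithin_Iic_nonpos_of_min hdwVL hminL
    have hR := aux_derivWithin_Ici_nonneg_of_min hdwVR hminR
    rw [hVdef, aux_derivWithin_exp_mul μ cts xs (fun ξ => f₀ ξ ts) (Iic xs)
      (uniqueDiffOn_Iic xs xs self_mem_Iic) hdwL] at hL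
    rw [hVdef, aux_derivWithin_exp_mul μ cts xs (fun ξ => f₀ ξ ts) (Ici xs)
      (uniqueDiffOn_Ici xs xs self_mem_Ici) hdwR] at hR
    have hexp := Real.exp_pos (μ * xs + cts)
    have hL' : μ * f₀ xs ts + derivWithin (fun ξ => f₀ ξ ts) (Iic xs) xs ≤ 0 :=
      aux_nonpos_of_mul_nonpos hL hexp
    have hR' : 0 ≤ μ * f₀ xs ts + derivWithin (fun ξ => f₀ ξ ts) (Ici xs) xs :=
      aux_nonneg_of_mul_nonneg hR hexp
    have hjump := hbc_jump_lo ts htspos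
    have hsgn := hbc_sign1 ts htspos
    simp only [leftD, rightD] at hjump hsgn
    rw [← hcase] at hjump hsgn
    linarith
  · -- interior of region b
    obtain ⟨Fx, hF, hTd⟩ := hpde_b0 ts htspos xs ⟨hcase, hxhiLt⟩
    have hcontlo : ContinuousAt xlo ts := (hxlo_deriv ts hts0).continuousAt
    have hconthi : ContinuousAt xhi ts := (hxhi_deriv ts hts0).continuousAt
    have hevlo : ∀ᶠ τ in nhds ts, xlo τ < xs := hcontlo (Iio_mem_nhds hcase)
    have hevhi : ∀ᶠ τ in nhds ts, xs < xhi τ := hconthi (Ioi_mem_nhds hxhiLt)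
    have hevpos : ∀ᶠ τ in nhds ts, 0 < τ := eventually_gt_nhds htspos
    have htmin : ∀ᶠ τ in nhdsWithin ts (Iio ts),
        (fun τ => Real.exp (μ * xs - lam * τ) * f₀ xs τ) ts ≤
        (fun τ => Real.exp (μ * xs - lam * τ) * f₀ xs τ) τ := by
      filter_upwards [hevlo.filter_mono nhdsWithin_le_nhds,
        hevhi.filter_mono nhdsWithin_le_nhds,
        hevpos.filter_mono nhdsWithin_le_nhds, self_mem_nhdsWithin] with τ h1 h1' h2 h3
      have hmem : (xs, τ) ∈ RA ∪ RB := by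
        right
        refine ⟨h2.le, le_trans (le_of_lt h3) htsT, ?_, ?_⟩
        · rw [hxlo'eq _ h2.le]; exact h1.le
        · rw [hxhi'eq _ h2.le]; exact h1'.le
      exact hpSmin (xs, τ) hmem
    have hdt : HasDerivAt (fun τ => Real.exp (μ * xs - lam * τ) * f₀ xs τ)
        (-lam * Real.exp (μ * xs - lam * ts) * f₀ xs ts +
          Real.exp (μ * xs - lam * ts) * (Fx - g (f₀ xs ts) (f₁ xs ts))) ts := by
      have he : HasDerivAt (fun τ : ℝ => Real.exp (μ * xs - lam * τ))
          (-lam * Real.exp (μ * xs - lam * ts)) ts := by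
        have h1 : HasDerivAt (fun τ : ℝ => μ * xs - lam * τ) (-lam) ts := by
          simpa using ((hasDerivAt_id ts).const_mul lam).const_sub (μ * xs)
        simpa [mul_comm] using h1.exp
      exact he.mul hTd
    have hdt0 := aux_deriv_nonpos_of_left_min hdt htmin
    have hgb : g (f₀ xs ts) (f₁ xs ts) ≤ -(f₀ xs ts) := by
      have h1 := aux_lip g hg hG3 (f₀ xs ts) (f₁ xs ts)
      have h2 := hG1 (f₁ xs ts)
      rw [abs_of_neg hfneg] at h1
      linarith
    have hup : Fx ≤ (lam - 1) * f₀ xs ts := by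
      have h9 : Real.exp (μ * xs - lam * ts) *
          (-lam * f₀ xs ts + (Fx - g (f₀ xs ts) (f₁ xs ts))) =
          -lam * Real.exp (μ * xs - lam * ts) * f₀ xs ts +
            Real.exp (μ * xs - lam * ts) * (Fx - g (f₀ xs ts) (f₁ xs ts)) := by ring
      have h10 := aux_nonpos_of_mul_nonpos (h9 ▸ hdt0 : _) (Real.exp_pos _)
      nlinarith [hgb, h10]
    set Aa : ℝ := xa ts / (C * R) - u ts with hAadef
    have hF' : HasDerivAt (fun ξ => σ ^ 2 / 2 * deriv (fun ζ => f₀ ζ ts) ξ -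
        (Aa - ξ / (C * R)) * f₀ ξ ts) Fx xs := by
      have hfun : (fun ξ => σ ^ 2 / 2 * deriv (fun ζ => f₀ ζ ts) ξ -
          (α₀ ξ ts - u ts) * f₀ ξ ts) = (fun ξ => σ ^ 2 / 2 * deriv (fun ζ => f₀ ζ ts) ξ -
          (Aa - ξ / (C * R)) * f₀ ξ ts) := by
        funext ξ
        rw [hα₀, hAadef]
        ring
      rw [← hfun]
      exact hF
    have hlow := aux_interior_flux_lower σ (C * R) μ cts hσ hCR (fun ξ => f₀ ξ ts)
      (xlo ts) (xhi ts) xs Aa Fx ⟨hcase, hxhiLt⟩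
      (fun y hy => hf₀_x ts htspos y (Or.inr hy))
      (fun y hy => by
        have h := hsliceV y ⟨le_trans hrng.1.le hy.1.le, hy.2.le⟩
        simpa [hVdef] using h) hF'
    have hAabs : |Aa - xs / (C * R)| ≤ B₀ := by
      have heq : Aa - xs / (C * R) = (xa ts - xs) / (C * R) - u ts := by
        rw [hAadef]; ring
      rw [heq]
      exact (habs ts ⟨hts0, htsT⟩ xs ⟨hxsL, le_trans hxsHi hrng.2.2.le⟩).1
    have h1 : μ * (Aa - xs / (C * R)) ≤ μ * B₀ :=
      mul_le_mul_of_nonneg_left (abs_le.1 hAabs).2 hμ0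
    have hKf := le_trans hlow hup
    rw [hlamdef] at hKf
    nlinarith [hKf, h1, hfneg]
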